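/- Let U ⊆ ℝ^d be a finite set, let v ∈ U be a vertex (extreme point) of the convex hull of U, and let U' = U \ {v}. If U' is nonempty, then there exists an affine hyperplane H such that v and U' \ H lie strictly on opposite sides of H, and |H ∩ U'| ≥ rank(U'). -/

import Mathlib

open Classical

/-- The rank of a finite set `X ⊆ ℝ^d`: the minimum dimension of an affine
subspace containing `X`. -/
noncomputable def affRank {d : ℕ} (X : Finset (Fin d → ℝ)) : ℕ :=
  Module.finrank ℝ (affineSpan ℝ (X : Set (Fin d → ℝ))).direction

set_option maxHeartbeats 1000000

/-- Rotation lemma: given a hyperplane supporting `S` from below with `v` strictly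
below it, we can rotate it (keeping the touching set) until the touching set,
together with `v`, affinely spans the same space as `S` together with `v`. -/
lemma rotate_aux {d : ℕ} (S : Finset (Fin d → ℝ)) (v : Fin d → ℝ) :
    ∀ (n : ℕ) (φ : (Fin d → ℝ) →ₗ[ℝ] ℝ) (c : ℝ), φ v < c → (∀ x ∈ S, c ≤ φ x) →
    (S.filter fun x => φ x = c).Nonempty →
    S.card - (S.filter fun x => φ x = c).card ≤ n →
    ∃ (φ' : (Fin d → ℝ) →ₗ[ℝ] ℝ) (c' : ℝ), φ' v < c' ∧ (∀ x ∈ S, c' ≤ φ' x) ∧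
      (S.filter fun x => φ' x = c').Nonempty ∧
      affineSpan ℝ (insert v ((S.filter fun x => φ' x = c') : Set (Fin d → ℝ)))
        = affineSpan ℝ (insert v (S : Set (Fin d → ℝ))) := by
  intro n
  induction n with
  | zero =>
    intro φ c h1 h2 h3 h4
    have hsub : (S.filter fun x => φ x = c) ⊆ S := Finset.filter_subset _ _
    have hcard : S.card ≤ (S.filter fun x => φ x = c).card := by
      have := Finset.card_le_card hsub
      omega
    have hFS : (S.filter fun x => φ x = c) = S := Finset.eq_of_subset_of_card_le hsub hcard
    exact ⟨φ, c, h1, h2, h3, by rw [hFS]⟩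
  | succ n ih =>
    intro φ c h1 h2 h3 h4
    by_cases hspan : affineSpan ℝ (insert v ((S.filter fun x => φ x = c) : Set (Fin d → ℝ)))
        = affineSpan ℝ (insert v (S : Set (Fin d → ℝ)))
    · exact ⟨φ, c, h1, h2, h3, hspan⟩
    set F : Finset (Fin d → ℝ) := S.filter fun x => φ x = c with hFdef
    have hFS : F ⊆ S := Finset.filter_subset _ _
    set A₀ : AffineSubspace ℝ (Fin d → ℝ) := affineSpan ℝ (insert v (F : Set (Fin d → ℝ)))
      with hA₀def
    have hvA : v ∈ A₀ := mem_affineSpan ℝ (Set.mem_insert _ _)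
    have hA0le : A₀ ≤ affineSpan ℝ (insert v (S : Set (Fin d → ℝ))) :=
      affineSpan_mono ℝ (Set.insert_subset_insert (Finset.coe_subset.mpr hFS))
    -- find a point of S outside A₀
    have hx1 : ∃ x₁ ∈ S, x₁ ∉ A₀ := by
      by_contra hcon
      push_neg at hcon
      apply hspan
      refine le_antisymm hA0le (affineSpan_le.mpr ?_)
      rintro x (rfl | hx)
      · exact hvA
      · exact hcon x (Finset.mem_coe.mp hx)
    obtain ⟨x₁, hx₁S, hx₁⟩ := hx1
    set W : Submodule ℝ (Fin d → ℝ) := A₀.direction with hWdef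
    have hq : x₁ - v ∉ W := by
      intro hmem
      apply hx₁
      have := (AffineSubspace.vsub_right_mem_direction_iff_mem hvA x₁).mp
        (by rwa [vsub_eq_sub])
      exact this
    have hqQ : (Submodule.Quotient.mk (p := W) (x₁ - v)) ≠ 0 := by
      rw [Ne, Submodule.Quotient.mk_eq_zero]
      exact hq
    have hdual : ∃ ψ : Module.Dual ℝ ((Fin d → ℝ) ⧸ W),
        ψ (Submodule.Quotient.mk (x₁ - v)) ≠ 0 := by
      by_contra hcon
      push_neg at hcon
      exact hqQ ((Module.forall_dual_apply_eq_zero_iff ℝ _).mp hcon)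
    obtain ⟨ψ, hψ⟩ := hdual
    -- choose the sign so that `g (x₁ - v) < 0`
    have hsign : ∃ g : (Fin d → ℝ) →ₗ[ℝ] ℝ, g (x₁ - v) < 0 ∧ ∀ w ∈ W, g w = 0 := by
      have hg0W : ∀ w ∈ W, (ψ.comp W.mkQ) w = 0 := by
        intro w hw
        have : W.mkQ w = 0 := (Submodule.Quotient.mk_eq_zero W).mpr hw
        simp [LinearMap.comp_apply, this]
      rcases lt_or_gt_of_ne hψ with hlt | hgt
      · exact ⟨ψ.comp W.mkQ, by simpa [LinearMap.comp_apply] using hlt, hg0W⟩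
      · refine ⟨-(ψ.comp W.mkQ), by simpa [LinearMap.comp_apply] using neg_neg_of_pos hgt,
          fun w hw => by simp [hg0W w hw]⟩
    obtain ⟨g, hgx₁, hgW⟩ := hsign
    -- members of F are killed by g (translated by v)
    have hgF : ∀ x ∈ F, g (x - v) = 0 := by
      intro x hx
      have hxA : x ∈ A₀ := mem_affineSpan ℝ (Set.mem_insert_of_mem _ (Finset.mem_coe.mpr hx))
      have : x -ᵥ v ∈ W := AffineSubspace.vsub_mem_direction hxA hvA
      exact hgW _ (by rwa [vsub_eq_sub] at this)
    set T : Finset (Fin d → ℝ) := S.filter (fun x => g (x - v) < 0) with hTdef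
    have hTne : T.Nonempty := ⟨x₁, Finset.mem_filter.mpr ⟨hx₁S, hgx₁⟩⟩
    have hTpos : ∀ x ∈ T, 0 < φ x - c := by
      intro x hx
      obtain ⟨hxS, hxg⟩ := Finset.mem_filter.mp hx
      have hxF : x ∉ F := fun h => absurd (hgF x h) (ne_of_lt hxg)
      have hxne : φ x ≠ c := fun h => hxF (Finset.mem_filter.mpr ⟨hxS, h⟩)
      have := h2 x hxS
      cases lt_or_eq_of_le this with
      | inl h => linarith
      | inr h => exact absurd h.symm hxne
    set t : ℝ := T.inf' hTne (fun x => (φ x - c) / (-(g (x - v)))) with htdef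
    have ht0 : 0 ≤ t := by
      refine Finset.le_inf' hTne _ (fun x hx => ?_)
      have hxg := (Finset.mem_filter.mp hx).2
      exact div_nonneg (le_of_lt (hTpos x hx)) (by linarith)
    set φ₂ : (Fin d → ℝ) →ₗ[ℝ] ℝ := φ + t • g with hφ₂def
    set c₂ : ℝ := c + t * g v with hc₂def
    have key : ∀ x, φ₂ x - c₂ = (φ x - c) + t * g (x - v) := by
      intro x
      simp only [hφ₂def, hc₂def, LinearMap.add_apply, LinearMap.smul_apply, smul_eq_mul,
        map_sub]
      ring
    have h1' : φ₂ v < c₂ := by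
      have := key v
      simp only [sub_self, map_zero, mul_zero, add_zero] at this
      linarith
    have h2' : ∀ x ∈ S, c₂ ≤ φ₂ x := by
      intro x hxS
      by_cases hg : g (x - v) < 0
      · have hxT : x ∈ T := Finset.mem_filter.mpr ⟨hxS, hg⟩
        have hle : t ≤ (φ x - c) / (-(g (x - v))) := Finset.inf'_le _ hxT
        have hD : 0 < -(g (x - v)) := by linarith
        have := (le_div_iff₀ hD).mp hle
        have hk := key x
        nlinarith
      · push_neg at hg
        have := h2 x hxS
        have hk := key x
        nlinarith
    -- F grows: old touching points stay, and the argmin of T joins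
    have hFsub : F ⊆ S.filter fun x => φ₂ x = c₂ := by
      intro x hx
      obtain ⟨hxS, hxc⟩ := Finset.mem_filter.mp hx
      refine Finset.mem_filter.mpr ⟨hxS, ?_⟩
      have := key x
      rw [hgF x hx] at this
      rw [hxc] at this
      simp at this
      linarith
    obtain ⟨y, hyT, hyt⟩ := Finset.exists_mem_eq_inf' hTne (fun x => (φ x - c) / (-(g (x - v))))
    have hyS : y ∈ S := (Finset.mem_filter.mp hyT).1
    have hyg : g (y - v) < 0 := (Finset.mem_filter.mp hyT).2
    have hyF2 : y ∈ S.filter fun x => φ₂ x = c₂ := by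
      refine Finset.mem_filter.mpr ⟨hyS, ?_⟩
      have hk := key y
      have hD : 0 < -(g (y - v)) := by linarith
      have hgne : g (y - v) ≠ 0 := ne_of_lt hyg
      have hty : t * g (y - v) = -(φ y - c) := by
        rw [show t = (φ y - c) / -g (y - v) from htdef.trans hyt]
        have hgyv : g v - g y ≠ 0 := by
          have h := map_sub g y v
          intro h0
          apply hgne
          linarith
        field_simp
      linarith [hk, hty]
    have hyF : y ∉ F := fun h => absurd (hgF y h) (ne_of_lt hyg)
    have hcardlt : F.card < (S.filter fun x => φ₂ x = c₂).card :=
      Finset.card_lt_card (Finset.ssubset_iff_of_subset hFsub |>.mpr ⟨y, hyF2, hyF⟩)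
    refine ih φ₂ c₂ h1' h2' ⟨y, hyF2⟩ ?_
    have : (S.filter fun x => φ₂ x = c₂).card ≤ S.card :=
      Finset.card_le_card (Finset.filter_subset _ _)
    omega

/-- If `v` is a vertex (extreme point) of `conv(U)` and `U' = U \ {v}` is nonempty,
then there is an affine hyperplane `H = {x : φ x = c}` (with `φ` a nonzero linear
functional) such that `v` and `U' \ H` lie strictly on opposite sides of `H`,
and `|H ∩ U'| ≥ rank(U')`. -/
theorem facet_hyperplane (d : ℕ) (U : Finset (Fin d → ℝ)) (v : Fin d → ℝ)
    (hv : v ∈ U)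
    (hext : v ∈ Set.extremePoints ℝ (convexHull ℝ (U : Set (Fin d → ℝ))))
    (hU' : (U.erase v).Nonempty) :
    ∃ (φ : (Fin d → ℝ) →ₗ[ℝ] ℝ) (c : ℝ), φ ≠ 0 ∧ φ v < c ∧
      (∀ x ∈ U.erase v, φ x ≠ c → c < φ x) ∧
      affRank (U.erase v) ≤ ((U.erase v).filter fun x => φ x = c).card := by
  set S : Finset (Fin d → ℝ) := U.erase v with hSdef
  -- v is not in the convex hull of the other points
  have hconv : v ∉ convexHull ℝ (S : Set (Fin d → ℝ)) := by
    have h := (convex_convexHull ℝ (U : Set (Fin d → ℝ))).mem_extremePoints_iff_mem_diff_convexHull_diff.mp hext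
    intro hmem
    apply h.2
    refine convexHull_mono ?_ hmem
    rw [hSdef, Finset.coe_erase]
    exact Set.diff_subset_diff_left (subset_convexHull ℝ _)
  -- strict separation
  obtain ⟨f, u, hfv, hfS⟩ := geometric_hahn_banach_point_closed
    (convex_convexHull ℝ (S : Set (Fin d → ℝ))) (S.finite_toSet.isClosed_convexHull (𝕜 := ℝ)) hconv
  set φ₀ : (Fin d → ℝ) →ₗ[ℝ] ℝ := (f : (Fin d → ℝ) →L[ℝ] ℝ).toLinearMap with hφ₀def
  set c₀ : ℝ := S.inf' hU' (fun x => f x) with hc₀def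
  have hv0 : φ₀ v < c₀ := by
    refine lt_of_lt_of_le hfv (Finset.le_inf' hU' _ (fun x hx => ?_))
    exact (hfS x (subset_convexHull ℝ _ (Finset.mem_coe.mpr hx))).le
  have hge : ∀ x ∈ S, c₀ ≤ φ₀ x := fun x hx => Finset.inf'_le _ hx
  have hne : (S.filter fun x => φ₀ x = c₀).Nonempty := by
    obtain ⟨x₀, hx₀, hval⟩ := Finset.exists_mem_eq_inf' hU' (fun x => f x)
    exact ⟨x₀, Finset.mem_filter.mpr ⟨hx₀, hval.symm⟩⟩
  obtain ⟨φ, c, h1, h2, h3, hspan⟩ :=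
    rotate_aux S v S.card φ₀ c₀ hv0 hge hne (Nat.sub_le _ _)
  set F : Finset (Fin d → ℝ) := S.filter fun x => φ x = c with hFdef
  obtain ⟨z, hzS⟩ := hU'
  refine ⟨φ, c, ?_, h1, ?_, ?_⟩
  · intro h0
    rw [h0] at h1 h2
    have := h2 z hzS
    simp at h1 this
    linarith
  · intro x hxS hxne
    exact lt_of_le_of_ne (h2 x hxS) (Ne.symm hxne)
  · -- rank bound
    have hFne : F.Nonempty := h3
    have hFpos : 0 < F.card := Finset.card_pos.mpr hFne
    have e1 : affRank S = Module.finrank ℝ (vectorSpan ℝ (S : Set (Fin d → ℝ))) := by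
      rw [affRank, direction_affineSpan]
    have e2 : Module.finrank ℝ (vectorSpan ℝ (S : Set (Fin d → ℝ)))
        ≤ Module.finrank ℝ (vectorSpan ℝ (insert v (S : Set (Fin d → ℝ)))) :=
      Submodule.finrank_mono (vectorSpan_mono ℝ (Set.subset_insert _ _))
    have e3 : vectorSpan ℝ (insert v (F : Set (Fin d → ℝ)))
        = vectorSpan ℝ (insert v (S : Set (Fin d → ℝ))) := by
      rw [← direction_affineSpan, ← direction_affineSpan, hspan]
    have e4 : Module.finrank ℝ (vectorSpan ℝ (insert v (F : Set (Fin d → ℝ))))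
        ≤ Module.finrank ℝ (vectorSpan ℝ (F : Set (Fin d → ℝ))) + 1 :=
      finrank_vectorSpan_insert_le_set ℝ _ v
    have e5 : Module.finrank ℝ (vectorSpan ℝ (F : Set (Fin d → ℝ))) ≤ F.card - 1 := by
      have himg : F.image id = F := Finset.image_id
      have hc : F.card = (F.card - 1) + 1 := by omega
      have := finrank_vectorSpan_image_finset_le ℝ id F hc
      rwa [himg] at this
    rw [← e3] at e2
    have haux : affRank S ≤ F.card := by rw [e1]; omega
    exact haux
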